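/- Let 1 < p < 2, p' = p/(p-1), K = (p-1)^{-p}, and let φ be the implicit function with φ(s)(1+φ(s))^{p-2} = p^{p-2}s. Define L(s) = (p-1)/p · sφ(s) + (2-p)/(p(p-1)) s + s/(p(p-1)φ(s)) − (p-1)/p · s^{p/(p-1)} for s > 0. Then L(s) ≤ 1/(p(p-1)^p) for all s > 0, with equality at s = (p-1)^{1-p}. -/

import Mathlib

open Real Set

noncomputable def L (p : ℝ) (φ : ℝ → ℝ) (s : ℝ) : ℝ :=
  (p - 1) / p * (s * φ s) + (2 - p) / (p * (p - 1)) * s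
    + s / (p * (p - 1) * φ s) - (p - 1) / p * s ^ (p / (p - 1))

/-- The inverse function of φ : s = hh p t. -/
noncomputable def hh (p t : ℝ) : ℝ := p ^ (2 - p) * t * (1 + t) ^ (p - 2)

/-- Derivative of hh. -/
noncomputable def dd (p t : ℝ) : ℝ := p ^ (2 - p) * (1 + t) ^ (p - 3) * (1 + (p - 1) * t)

/-- L as a function of t = φ s. -/
noncomputable def MM (p t : ℝ) : ℝ :=
  (p - 1) / p * (hh p t * t) + (2 - p) / (p * (p - 1)) * hh p t
    + hh p t / (p * (p - 1) * t) - (p - 1) / p * (hh p t) ^ (p / (p - 1))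

section aux

variable {p t : ℝ}

lemma hh_pos (hp1 : 1 < p) (ht : 0 < t) : 0 < hh p t := by
  have hp0 : (0:ℝ) < p := by linarith
  have : (0:ℝ) < 1 + t := by linarith
  unfold hh
  positivity

lemma dd_pos (hp1 : 1 < p) (ht : 0 < t) : 0 < dd p t := by
  have hp0 : (0:ℝ) < p := by linarith
  have h1 : (0:ℝ) < 1 + t := by linarith
  have h2 : (0:ℝ) < 1 + (p - 1) * t := by nlinarith
  unfold dd
  positivity

lemma pow_split (ht : 0 < t) : (1 + t) ^ (p - 2) = (1 + t) ^ (p - 3) * (1 + t) := by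
  have h1 : (0:ℝ) < 1 + t := by linarith
  rw [show p - 2 = (p - 3) + 1 by ring, Real.rpow_add h1, Real.rpow_one]

lemma hasDerivAt_hh (hp1 : 1 < p) (ht : 0 < t) : HasDerivAt (hh p) (dd p t) t := by
  have h1 : (0:ℝ) < 1 + t := by linarith
  have hbase : HasDerivAt (fun x : ℝ => 1 + x) 1 t := (hasDerivAt_id t).const_add 1
  have hpow : HasDerivAt (fun x : ℝ => (1 + x) ^ (p - 2)) (1 * (p - 2) * (1 + t) ^ (p - 2 - 1)) t :=
    hbase.rpow_const (Or.inl h1.ne')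
  have hmul : HasDerivAt (fun x : ℝ => x * (1 + x) ^ (p - 2))
      (1 * (1 + t) ^ (p - 2) + t * (1 * (p - 2) * (1 + t) ^ (p - 2 - 1))) t :=
    (hasDerivAt_id t).mul hpow
  have := hmul.const_mul (p ^ (2 - p))
  have heq : p ^ (2 - p) * (1 * (1 + t) ^ (p - 2) + t * (1 * (p - 2) * (1 + t) ^ (p - 2 - 1)))
      = dd p t := by
    rw [show p - 2 - 1 = p - 3 by ring, pow_split ht]
    unfold dd; ring
  rw [heq] at this
  convert this using 2 with x
  · rfl
  · rfl
  unfold hh; ring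

lemma hasDerivAt_MM (hp1 : 1 < p) (ht : 0 < t) :
    HasDerivAt (MM p) (dd p t * (t - (hh p t) ^ (1 / (p - 1)))) t := by
  have hp0 : (0:ℝ) < p := by linarith
  have hp1' : p - 1 ≠ 0 := by intro h; linarith [h]
  have h1 : (0:ℝ) < 1 + t := by linarith
  have hhp := hh_pos (p := p) hp1 ht
  have hd := hasDerivAt_hh (p := p) hp1 ht
  have hA : HasDerivAt (fun x => (p - 1) / p * (hh p x * x))
      ((p - 1) / p * (dd p t * t + hh p t * 1)) t := (hd.mul (hasDerivAt_id t)).const_mul _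
  have hB : HasDerivAt (fun x => (2 - p) / (p * (p - 1)) * hh p x)
      ((2 - p) / (p * (p - 1)) * dd p t) t := hd.const_mul _
  have hden : HasDerivAt (fun x : ℝ => p * (p - 1) * x) (p * (p - 1)) t := by
    simpa using (hasDerivAt_id t).const_mul (p * (p - 1))
  have hdenne : p * (p - 1) * t ≠ 0 := by positivity
  have hC : HasDerivAt (fun x => hh p x / (p * (p - 1) * x))
      ((dd p t * (p * (p - 1) * t) - hh p t * (p * (p - 1))) / (p * (p - 1) * t) ^ 2) t :=
    hd.div hden hdenne
  have hD : HasDerivAt (fun x => (p - 1) / p * (hh p x) ^ (p / (p - 1)))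
      ((p - 1) / p * (dd p t * (p / (p - 1)) * (hh p t) ^ (p / (p - 1) - 1))) t :=
    (hd.rpow_const (Or.inl hhp.ne')).const_mul _
  have := ((hA.add hB).add hC).sub hD
  have hMM : MM p = fun x => ((p - 1) / p * (hh p x * x) + (2 - p) / (p * (p - 1)) * hh p x
      + hh p x / (p * (p - 1) * x)) - (p - 1) / p * (hh p x) ^ (p / (p - 1)) := by
    funext x; unfold MM; ring
  rw [hMM]
  convert this using 1
  · rfl
  · rfl
  · rfl
  rw [show p / (p - 1) - 1 = 1 / (p - 1) by field_simp; ring]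
  have hhh : hh p t = p ^ (2 - p) * t * ((1 + t) ^ (p - 3) * (1 + t)) := by
    rw [hh, pow_split ht]
  rw [hhh]
  unfold dd
  have hc : (0:ℝ) < p ^ (2 - p) := Real.rpow_pos_of_pos hp0 _
  have hb : (0:ℝ) < (1 + t) ^ (p - 3) := Real.rpow_pos_of_pos h1 _
  field_simp
  ring


lemma hh_lt (hp1 : 1 < p) (hp2 : p < 2) (ht : 0 < t) (h : t < 1 / (p - 1)) :
    hh p t < t ^ (p - 1) := by
  have hp0 : (0:ℝ) < p := by linarith
  have hpm : (0:ℝ) < p - 1 := by linarith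
  have h1 : (0:ℝ) < 1 + t := by linarith
  have key : ((1 + t) / p) ^ (p - 2) < t ^ (p - 2) := by
    refine Real.rpow_lt_rpow_of_neg ht ?_ (by linarith)
    rw [lt_div_iff₀ hp0]
    have := (lt_div_iff₀ hpm).mp h
    nlinarith
  have hc : p ^ (2 - p) * (1 + t) ^ (p - 2) = ((1 + t) / p) ^ (p - 2) := by
    rw [Real.div_rpow h1.le hp0.le, show (2:ℝ) - p = -(p - 2) by ring,
      Real.rpow_neg hp0.le]
    field_simp
  have ht' : t ^ (p - 1) = t * t ^ (p - 2) := by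
    rw [show p - 1 = 1 + (p - 2) by ring, Real.rpow_add ht, Real.rpow_one]
  rw [ht']
  calc hh p t = t * (p ^ (2 - p) * (1 + t) ^ (p - 2)) := by unfold hh; ring
    _ = t * ((1 + t) / p) ^ (p - 2) := by rw [hc]
    _ < t * t ^ (p - 2) := by exact (mul_lt_mul_iff_right₀ ht).mpr key

lemma hh_gt (hp1 : 1 < p) (hp2 : p < 2) (h : 1 / (p - 1) < t) :
    t ^ (p - 1) < hh p t := by
  have hp0 : (0:ℝ) < p := by linarith
  have hpm : (0:ℝ) < p - 1 := by linarith
  have ht : 0 < t := lt_trans (by positivity) h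
  have h1 : (0:ℝ) < 1 + t := by linarith
  have key : t ^ (p - 2) < ((1 + t) / p) ^ (p - 2) := by
    refine Real.rpow_lt_rpow_of_neg (by positivity) ?_ (by linarith)
    rw [div_lt_iff₀ hp0]
    have := (div_lt_iff₀ hpm).mp h
    nlinarith
  have hc : p ^ (2 - p) * (1 + t) ^ (p - 2) = ((1 + t) / p) ^ (p - 2) := by
    rw [Real.div_rpow h1.le hp0.le, show (2:ℝ) - p = -(p - 2) by ring,
      Real.rpow_neg hp0.le]
    field_simp
  have ht' : t ^ (p - 1) = t * t ^ (p - 2) := by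
    rw [show p - 1 = 1 + (p - 2) by ring, Real.rpow_add ht, Real.rpow_one]
  rw [ht']
  calc t * t ^ (p - 2) < t * ((1 + t) / p) ^ (p - 2) := (mul_lt_mul_iff_right₀ ht).mpr key
    _ = hh p t := by rw [← hc]; unfold hh; ring

lemma root_lt (hp1 : 1 < p) (hp2 : p < 2) (ht : 0 < t) (h : t < 1 / (p - 1)) :
    (hh p t) ^ (1 / (p - 1)) < t := by
  have hpm : (0:ℝ) < p - 1 := by linarith
  have := Real.rpow_lt_rpow (hh_pos hp1 ht).le (hh_lt hp1 hp2 ht h) (by positivity : (0:ℝ) < 1 / (p - 1))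
  rwa [← Real.rpow_mul ht.le, mul_one_div, div_self hpm.ne', Real.rpow_one] at this

lemma root_gt (hp1 : 1 < p) (hp2 : p < 2) (h : 1 / (p - 1) < t) :
    t < (hh p t) ^ (1 / (p - 1)) := by
  have hpm : (0:ℝ) < p - 1 := by linarith
  have ht : 0 < t := lt_trans (by positivity) h
  have := Real.rpow_lt_rpow (Real.rpow_pos_of_pos ht (p - 1)).le (hh_gt hp1 hp2 h)
    (by positivity : (0:ℝ) < 1 / (p - 1))
  rwa [← Real.rpow_mul ht.le, mul_one_div, div_self hpm.ne', Real.rpow_one] at this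

lemma hh_t0 (hp1 : 1 < p) (hp2 : p < 2) : hh p (1 / (p - 1)) = (p - 1) ^ (1 - p) := by
  have hp0 : (0:ℝ) < p := by linarith
  have hpm : (0:ℝ) < p - 1 := by linarith
  have h1 : (1:ℝ) + 1 / (p - 1) = p / (p - 1) := by field_simp; ring
  unfold hh
  rw [h1, Real.div_rpow hp0.le hpm.le]
  rw [show (1:ℝ) - p = -(p - 1) by ring, Real.rpow_neg hpm.le]
  have hsplit : (p - 1) ^ (p - 1) = (p - 1) * (p - 1) ^ (p - 2) := by
    nth_rewrite 3 [← Real.rpow_one (p - 1)]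
    rw [← Real.rpow_add hpm]
    congr 1; ring
  have hpp : p ^ (2 - p) * p ^ (p - 2) = 1 := by
    rw [← Real.rpow_add hp0]; norm_num
  rw [hsplit]
  have hb : (0:ℝ) < (p - 1) ^ (p - 2) := Real.rpow_pos_of_pos hpm _
  field_simp
  nlinarith [hpp, hb, hpm]


lemma MM_t0 (hp1 : 1 < p) (hp2 : p < 2) : MM p (1 / (p - 1)) = 1 / (p * (p - 1) ^ p) := by
  have hp0 : (0:ℝ) < p := by linarith
  have hpm : (0:ℝ) < p - 1 := by linarith
  have hB : (0:ℝ) < (p - 1) ^ p := Real.rpow_pos_of_pos hpm _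
  have hBrt : (hh p (1 / (p - 1))) ^ (p / (p - 1)) = ((p - 1) ^ p)⁻¹ := by
    rw [hh_t0 hp1 hp2, ← Real.rpow_mul hpm.le,
      show (1 - p) * (p / (p - 1)) = -p by field_simp; ring, Real.rpow_neg hpm.le]
  have haB : (p - 1) ^ ((1:ℝ) - p) * (p - 1) ^ p = p - 1 := by
    rw [← Real.rpow_add hpm, show (1:ℝ) - p + p = 1 by ring, Real.rpow_one]
  have ha : (p - 1) ^ ((1:ℝ) - p) = (p - 1) / (p - 1) ^ p := by
    rw [eq_div_iff hB.ne']; exact haB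
  unfold MM
  rw [hBrt, hh_t0 hp1 hp2, ha]
  field_simp
  ring

lemma hh_mono (hp1 : 1 < p) : StrictMonoOn (hh p) (Ioi 0) :=
  strictMonoOn_of_deriv_pos (convex_Ioi 0)
    (fun x hx => (hasDerivAt_hh hp1 hx).differentiableAt.continuousAt.continuousWithinAt)
    (fun x hx => by
      rw [interior_Ioi] at hx
      rw [(hasDerivAt_hh hp1 hx).deriv]
      exact dd_pos hp1 hx)

lemma MM_le (hp1 : 1 < p) (hp2 : p < 2) (ht : 0 < t) :
    MM p t ≤ MM p (1 / (p - 1)) := by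
  have hpm : (0:ℝ) < p - 1 := by linarith
  have ht0 : (0:ℝ) < 1 / (p - 1) := by positivity
  rcases le_or_gt t (1 / (p - 1)) with hle | hgt
  · have mono : StrictMonoOn (MM p) (Ioc 0 (1 / (p - 1))) := by
      refine strictMonoOn_of_deriv_pos (convex_Ioc _ _)
        (fun x hx => (hasDerivAt_MM hp1 hx.1).differentiableAt.continuousAt.continuousWithinAt)
        (fun x hx => ?_)
      rw [interior_Ioc] at hx
      rw [(hasDerivAt_MM hp1 hx.1).deriv]
      exact mul_pos (dd_pos hp1 hx.1) (sub_pos.mpr (root_lt hp1 hp2 hx.1 hx.2))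
    rcases eq_or_lt_of_le hle with heq | hlt
    · rw [heq]
    · exact (mono ⟨ht, hle⟩ ⟨ht0, le_refl _⟩ hlt).le
  · have anti : StrictAntiOn (MM p) (Ici (1 / (p - 1))) := by
      refine strictAntiOn_of_deriv_neg (convex_Ici _)
        (fun x hx => (hasDerivAt_MM hp1 (lt_of_lt_of_le ht0 hx)).differentiableAt.continuousAt.continuousWithinAt)
        (fun x hx => ?_)
      rw [interior_Ici] at hx
      have hx0 : 0 < x := lt_trans ht0 hx
      rw [(hasDerivAt_MM hp1 hx0).deriv]
      exact mul_neg_of_pos_of_neg (dd_pos hp1 hx0) (sub_neg.mpr (root_gt hp1 hp2 hx))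
    exact (anti (self_mem_Ici) (mem_Ici.mpr hgt.le) hgt).le

lemma hh_phi (hp1 : 1 < p) {φ : ℝ → ℝ} {s : ℝ}
    (hφ : ∀ s, 0 < s → φ s * (1 + φ s) ^ (p - 2) = p ^ (p - 2) * s) (hs : 0 < s) :
    hh p (φ s) = s := by
  have hp0 : (0:ℝ) < p := by linarith
  unfold hh
  rw [mul_assoc, hφ s hs, ← mul_assoc, ← Real.rpow_add hp0,
    show (2:ℝ) - p + (p - 2) = 0 by ring, Real.rpow_zero, one_mul]

lemma L_eq (hp1 : 1 < p) {φ : ℝ → ℝ} {s : ℝ}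
    (hφ : ∀ s, 0 < s → φ s * (1 + φ s) ^ (p - 2) = p ^ (p - 2) * s) (hs : 0 < s) :
    L p φ s = MM p (φ s) := by
  unfold L MM
  rw [hh_phi hp1 hφ hs]

end aux

theorem stmt_14 (p : ℝ) (hp1 : 1 < p) (hp2 : p < 2) (φ : ℝ → ℝ)
    (hφpos : ∀ s, 0 < s → 0 < φ s)
    (hφ : ∀ s, 0 < s → φ s * (1 + φ s) ^ (p - 2) = p ^ (p - 2) * s) :
    (∀ s, 0 < s → L p φ s ≤ 1 / (p * (p - 1) ^ p)) ∧
    L p φ ((p - 1) ^ (1 - p)) = 1 / (p * (p - 1) ^ p) := by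
  have hpm : (0:ℝ) < p - 1 := by linarith
  constructor
  · intro s hs
    rw [L_eq hp1 hφ hs]
    calc MM p (φ s) ≤ MM p (1 / (p - 1)) := MM_le hp1 hp2 (hφpos s hs)
      _ = 1 / (p * (p - 1) ^ p) := MM_t0 hp1 hp2
  · have hs0 : (0:ℝ) < (p - 1) ^ ((1:ℝ) - p) := Real.rpow_pos_of_pos hpm _
    rw [L_eq hp1 hφ hs0]
    have hphi : φ ((p - 1) ^ ((1:ℝ) - p)) = 1 / (p - 1) := by
      apply (hh_mono hp1).injOn (mem_Ioi.mpr (hφpos _ hs0))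
        (mem_Ioi.mpr (by positivity))
      rw [hh_phi hp1 hφ hs0, hh_t0 hp1 hp2]
    rw [hphi, MM_t0 hp1 hp2]
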